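/- For every integer k ≥ 3, the cycle graph C_{2k} on 2k vertices is not weakly closed. -/

import Mathlib

/-- `G` is weakly closed: some labeling of the vertices by `1, …, n` is such that for
every edge `{i, j}` with `i < j` and every `i < k < j`, `{i,k} ∈ E(G)` or `{k,j} ∈ E(G)`. -/
def WeaklyClosed {V : Type*} [Fintype V] (G : SimpleGraph V) : Prop :=
  ∃ σ : V ≃ Fin (Fintype.card V), ∀ i j k : V,
    G.Adj i j → σ i < σ k → σ k < σ j → G.Adj i k ∨ G.Adj k j

section Aux

variable {V : Type*} {Adj : V → V → Prop} {pos : V → ℕ}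

/-- If `a` sits at position `0` and has only two neighbours, its neighbour `q1`
(whose other neighbour is `q2`) must sit at position at most `3`. -/
lemma aux_pos_le
    (Hs : ∀ x y, Adj x y → Adj y x)
    (H : ∀ i j k, Adj i j → pos i < pos k → pos k < pos j → Adj i k ∨ Adj k j)
    (a p1 q1 q2 w1 w2 w3 : V)
    (ha : pos a = 0) (hw1 : pos w1 = 1) (hw2 : pos w2 = 2) (hw3 : pos w3 = 3)
    (haq : Adj a q1)
    (Na : ∀ v, Adj a v → v = p1 ∨ v = q1)
    (Nq : ∀ v, Adj q1 v → v = a ∨ v = q2) :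
    pos q1 ≤ 3 := by
  by_contra hcon
  push_neg at hcon
  have key : ∀ w : V, pos w = 1 ∨ pos w = 2 ∨ pos w = 3 → w = p1 ∨ w = q2 := by
    intro w hw
    have h1 : pos a < pos w := by omega
    have h2 : pos w < pos q1 := by omega
    rcases H a q1 w haq h1 h2 with h' | h'
    · rcases Na w h' with rfl | rfl
      · exact Or.inl rfl
      · omega
    · rcases Nq w (Hs _ _ h') with rfl | rfl
      · omega
      · exact Or.inr rfl
  rcases key w1 (by omega) with rfl | rfl <;>
    rcases key w2 (by omega) with rfl | rfl <;>
      rcases key w3 (by omega) with rfl | rfl <;> omega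

/-- The core combinatorial contradiction: in a weakly closed ordering of a graph
in which `a` (at position `0`) has exactly the neighbours `p1, q1`, where `p1`'s other
neighbour is `p2` and `q1`'s other neighbour is `q2`, we get a contradiction
(assuming the relevant vertices are distinct, as in a long cycle). -/
lemma aux_main
    (Hs : ∀ x y, Adj x y → Adj y x)
    (H : ∀ i j k, Adj i j → pos i < pos k → pos k < pos j → Adj i k ∨ Adj k j)
    (hinj : ∀ x y : V, pos x = pos y → x = y)
    (a p1 p2 q1 q2 w1 w2 w3 : V)
    (ha : pos a = 0) (hw1 : pos w1 = 1) (hw2 : pos w2 = 2) (hw3 : pos w3 = 3)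
    (hap : Adj a p1) (haq : Adj a q1) (hp12 : Adj p1 p2)
    (Na : ∀ v, Adj a v → v = p1 ∨ v = q1)
    (Np : ∀ v, Adj p1 v → v = a ∨ v = p2)
    (Nq : ∀ v, Adj q1 v → v = a ∨ v = q2)
    (hp1a : p1 ≠ a) (hq1a : q1 ≠ a) (hp2a : p2 ≠ a) (hq2a : q2 ≠ a)
    (hp1q2 : p1 ≠ q2) (hq1p2 : q1 ≠ p2) (hp2q2 : p2 ≠ q2)
    (hp1p2 : p1 ≠ p2) (hlt : pos p1 < pos q1) : False := by
  have hq3 : pos q1 ≤ 3 := aux_pos_le Hs H a p1 q1 q2 w1 w2 w3 ha hw1 hw2 hw3 haq Na Nq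
  have hp3 : pos p1 ≤ 3 :=
    aux_pos_le Hs H a q1 p1 p2 w1 w2 w3 ha hw1 hw2 hw3 hap
      (fun v hv => (Na v hv).symm) Np
  have hp0 : pos p1 ≠ 0 := fun h => hp1a (hinj _ _ (by omega))
  have hq0 : pos q1 ≠ 0 := fun h => hq1a (hinj _ _ (by omega))
  -- `p2`'s position is not 0 or the position of `p1`
  have hp2pos0 : pos p2 ≠ 0 := fun h => hp2a (hinj _ _ (by omega))
  have hp2posp1 : pos p2 ≠ pos p1 := fun h => hp1p2 (hinj _ _ h.symm)
  have hcases : (pos p1 = 1 ∧ pos q1 = 2) ∨ (pos p1 = 1 ∧ pos q1 = 3) ∨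
      (pos p1 = 2 ∧ pos q1 = 3) := by omega
  rcases hcases with ⟨e1, e2⟩ | ⟨e1, e2⟩ | ⟨e1, e2⟩
  · -- positions (1,2)
    have hp2posq1 : pos p2 ≠ 2 := fun h => hq1p2 (hinj _ _ (by omega))
    have h4 : pos q1 < pos p2 := by omega
    rcases H p1 p2 q1 hp12 (by omega) h4 with h' | h'
    · rcases Nq p1 (Hs _ _ h') with h'' | h''
      · exact hp1a h''
      · exact hp1q2 h''
    · rcases Nq p2 h' with h'' | h''
      · exact hp2a h''
      · exact hp2q2 h''
  · -- positions (1,3) : identify w2 with q2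
    have hw2q2 : w2 = q2 := by
      rcases H a q1 w2 haq (by omega) (by omega) with h' | h'
      · rcases Na w2 h' with h'' | h'' <;>
          · exfalso; have := congrArg pos h''; omega
      · rcases Nq w2 (Hs _ _ h') with h'' | h''
        · exfalso; have := congrArg pos h''; omega
        · exact h''
    have hp2pos2 : pos p2 ≠ 2 := fun h => hp2q2 (hinj _ _ (by rw [h, ← hw2q2, hw2]))
    have hp2pos3 : pos p2 ≠ 3 := fun h => hq1p2 (hinj _ _ (by omega))
    have h4 : pos q1 < pos p2 := by omega
    rcases H p1 p2 q1 hp12 (by omega) h4 with h' | h'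
    · rcases Nq p1 (Hs _ _ h') with h'' | h''
      · exact hp1a h''
      · exact hp1q2 h''
    · rcases Nq p2 h' with h'' | h''
      · exact hp2a h''
      · exact hp2q2 h''
  · -- positions (2,3) : identify w1 with p2
    have hw1p2 : w1 = p2 := by
      rcases H a p1 w1 hap (by omega) (by omega) with h' | h'
      · rcases Na w1 h' with h'' | h'' <;>
          · exfalso; have := congrArg pos h''; omega
      · rcases Np w1 (Hs _ _ h') with h'' | h''
        · exfalso; have := congrArg pos h''; omega
        · exact h''
    have hposp2 : pos p2 = 1 := by rw [← hw1p2]; exact hw1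
    rcases H a q1 p2 haq (by omega) (by omega) with h' | h'
    · rcases Na p2 h' with h'' | h''
      · exact hp1p2 h''.symm
      · exact hq1p2 h''.symm
    · rcases Nq p2 (Hs _ _ h') with h'' | h''
      · exact hp2a h''
      · exact hp2q2 h''

end Aux

open Fin.CommRing in
/-- For `k ≥ 3`, the cycle of length `2k` is not weakly closed. -/
theorem cycleGraph_even_not_weaklyClosed (k : ℕ) (hk : 3 ≤ k) :
    ¬ WeaklyClosed (SimpleGraph.cycleGraph (2 * k)) := by
  obtain ⟨m, hm⟩ : ∃ m, 2 * k = m + 2 := ⟨2 * k - 2, by omega⟩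
  have hm4 : 4 ≤ m := by omega
  rw [hm]
  rintro ⟨σ, hσ⟩
  set G := SimpleGraph.cycleGraph (m + 2) with hG
  -- basic Fin facts
  have key : ∀ d : ℕ, 0 < d → d < m + 2 → ((d : Fin (m + 2)) ≠ 0) := by
    intro d hd1 hd2 h
    have := congrArg Fin.val h
    rw [Fin.val_natCast, Fin.val_zero, Nat.mod_eq_of_lt hd2] at this
    omega
  -- the position function
  set pos : Fin (m + 2) → ℕ := fun v => (σ v : ℕ) with hpos
  have H : ∀ i j l, G.Adj i j → pos i < pos l → pos l < pos j → G.Adj i l ∨ G.Adj l j := by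
    intro i j l hij h1 h2
    exact hσ i j l hij (by exact h1) (by exact h2)
  have hinj : ∀ x y : Fin (m + 2), pos x = pos y → x = y := by
    intro x y h
    exact σ.injective (Fin.val_injective h)
  have Hs : ∀ x y : Fin (m + 2), G.Adj x y → G.Adj y x := fun x y h => h.symm
  -- vertices at given positions
  have exists_pos : ∀ t : ℕ, t < m + 2 → ∃ v : Fin (m + 2), pos v = t := by
    intro t ht
    refine ⟨σ.symm ⟨t, by simpa using ht⟩, ?_⟩
    simp [hpos]
  obtain ⟨a, ha⟩ := exists_pos 0 (by omega)
  obtain ⟨w1, hw1⟩ := exists_pos 1 (by omega)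
  obtain ⟨w2, hw2⟩ := exists_pos 2 (by omega)
  obtain ⟨w3, hw3⟩ := exists_pos 3 (by omega)
  -- adjacency facts in the cycle
  have hap : G.Adj a (a - 1) := by
    rw [hG, SimpleGraph.cycleGraph_adj]; left; ring
  have haq : G.Adj a (a + 1) := by
    rw [hG, SimpleGraph.cycleGraph_adj]; right; ring
  have hp12 : G.Adj (a - 1) (a - 2) := by
    rw [hG, SimpleGraph.cycleGraph_adj]; left; ring
  have Na : ∀ v, G.Adj a v → v = a - 1 ∨ v = a + 1 := by
    intro v hv
    rw [hG, SimpleGraph.cycleGraph_adj] at hv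
    rcases hv with h | h
    · left; linear_combination -h
    · right; linear_combination h
  have Np : ∀ v, G.Adj (a - 1) v → v = a ∨ v = a - 2 := by
    intro v hv
    rw [hG, SimpleGraph.cycleGraph_adj] at hv
    rcases hv with h | h
    · right; linear_combination -h
    · left; linear_combination h
  have Nq : ∀ v, G.Adj (a + 1) v → v = a ∨ v = a + 2 := by
    intro v hv
    rw [hG, SimpleGraph.cycleGraph_adj] at hv
    rcases hv with h | h
    · left; linear_combination -h
    · right; linear_combination h
  -- distinctness facts
  have d1 : a - 1 ≠ a := fun h => key 1 (by omega) (by omega) (by linear_combination -h)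
  have d2 : a + 1 ≠ a := fun h => key 1 (by omega) (by omega) (by linear_combination h)
  have d3 : a - 2 ≠ a := fun h => key 2 (by omega) (by omega) (by linear_combination -h)
  have d4 : a + 2 ≠ a := fun h => key 2 (by omega) (by omega) (by linear_combination h)
  have d5 : a - 1 ≠ a + 2 := fun h => key 3 (by omega) (by omega) (by linear_combination -h)
  have d6 : a + 1 ≠ a - 2 := fun h => key 3 (by omega) (by omega) (by linear_combination h)
  have d7 : a - 2 ≠ a + 2 := fun h => key 4 (by omega) (by omega) (by linear_combination -h)
  have d8 : a - 1 ≠ a - 2 := fun h => key 1 (by omega) (by omega) (by linear_combination h)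
  have d9 : a + 1 ≠ a + 2 := fun h => key 1 (by omega) (by omega) (by linear_combination -h)
  have d10 : a + 1 ≠ a - 1 := fun h => key 2 (by omega) (by omega) (by linear_combination h)
  -- the two neighbours of `a` have different positions
  rcases Nat.lt_or_ge (pos (a - 1)) (pos (a + 1)) with hlt | hge
  · exact aux_main Hs H hinj a (a - 1) (a - 2) (a + 1) (a + 2) w1 w2 w3
      ha hw1 hw2 hw3 hap haq hp12 Na Np Nq
      d1 d2 d3 d4 d5 d6 d7 d8 hlt
  · have hne : pos (a + 1) ≠ pos (a - 1) := fun h => d10 (hinj _ _ h)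
    have hlt : pos (a + 1) < pos (a - 1) := by omega
    exact aux_main Hs H hinj a (a + 1) (a + 2) (a - 1) (a - 2) w1 w2 w3
      ha hw1 hw2 hw3 haq hap (by
        rw [hG, SimpleGraph.cycleGraph_adj]; right; ring)
      (fun v hv => (Na v hv).symm) Nq Np
      d2 d1 d4 d3 d6 d5 d7.symm d9 hlt
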